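/- Let $R$ be a finite-dimensional symmetric $\mathbb{K}$-algebra with symmetric structure $\varphi: R \to \mathbb{K}$. For any finitely generated left $R$-module $M$ and any finitely generated projective left $R$-module $P$, the map $\mathfrak{t}_{M,P}: \mathrm{Hom}_R(M,P) \to D\,\mathrm{Hom}_R(P,M)$ given by $f \mapsto (g \mapsto \mathrm{tr}_P(f \circ g))$ is a $\mathbb{K}$-linear isomorphism. -/

import Mathlib

open Module

section Aux

variable {K : Type*} [Field K] {R : Type*} [Ring R] [Algebra K R]

/-- If `φ(r * a) = 0` for all `r`, then `a = 0`. -/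
theorem aux_phi_nondeg (φ : R →ₗ[K] K)
    (hker : ∀ I : Ideal R, (∀ a ∈ I, φ a = 0) → I = ⊥)
    (a : R) (h : ∀ r : R, φ (r * a) = 0) : a = 0 := by
  have hspan : Ideal.span {a} = ⊥ := by
    refine hker _ fun b hb => ?_
    obtain ⟨r, rfl⟩ := Ideal.mem_span_singleton'.mp hb
    exact h r
  have : a ∈ Ideal.span {a} := Ideal.mem_span_singleton_self a
  rw [hspan] at this
  simpa using this

end Aux

theorem trace_pairing_iso
    (K : Type*) [Field K] (R : Type*) [Ring R] [Algebra K R] [FiniteDimensional K R]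
    (φ : R →ₗ[K] K)
    (hsym : ∀ r s : R, φ (r * s) = φ (s * r))
    (hker : ∀ I : Ideal R, (∀ a ∈ I, φ a = 0) → I = ⊥)
    (M : Type*) [AddCommGroup M] [Module R M] [Module K M]
    [SMulCommClass R K M] [IsScalarTower K R M] [Module.Finite R M]
    (P : Type*) [AddCommGroup P] [Module R P] [Module K P]
    [SMulCommClass R K P] [IsScalarTower K R P]
    {m : ℕ} (x : Fin m → P) (θ : Fin m → P →ₗ[R] R)
    (hx : ∀ p : P, ∑ i, θ i p • x i = p) :
    ∃ e : (M →ₗ[R] P) ≃ₗ[K] Module.Dual K (P →ₗ[R] M),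
      ∀ (f : M →ₗ[R] P) (g : P →ₗ[R] M),
        e f g = ∑ i, φ (θ i (f (g (x i)))) := by
  classical
  -- Finiteness of `P` over `R`
  have hPfin : Module.Finite R P := by
    refine ⟨⟨Finset.univ.image x, ?_⟩⟩
    rw [eq_top_iff]
    intro p _
    rw [← hx p]
    exact Submodule.sum_mem _ fun i _ => Submodule.smul_mem _ _
      (Submodule.subset_span (by simp))
  have hMK : Module.Finite K M := Module.Finite.trans R M
  have hPK : Module.Finite K P := Module.Finite.trans R P
  -- Finite-dimensionality of the Hom spaces over K
  have hH1 : FiniteDimensional K (M →ₗ[R] P) :=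
    FiniteDimensional.of_injective
      (LinearMap.restrictScalarsₗ (S := R) (M := M) (N := P) (R := K) (R₁ := K))
      (LinearMap.restrictScalars_injective K)
  have hH2 : FiniteDimensional K (P →ₗ[R] M) :=
    FiniteDimensional.of_injective
      (LinearMap.restrictScalarsₗ (S := R) (M := P) (N := M) (R := K) (R₁ := K))
      (LinearMap.restrictScalars_injective K)
  -- The trace pairing
  set B : (M →ₗ[R] P) →ₗ[K] (P →ₗ[R] M) →ₗ[K] K :=
    LinearMap.mk₂ K (fun f g => ∑ i, φ (θ i (f (g (x i)))))
      (fun f f' g => by simp [Finset.sum_add_distrib])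
      (fun k f g => by simp [Finset.mul_sum])
      (fun f g g' => by simp [Finset.sum_add_distrib])
      (fun k f g => by simp [Finset.mul_sum]) with hB
  have hBapp : ∀ (f : M →ₗ[R] P) (g : P →ₗ[R] M),
      B f g = ∑ i, φ (θ i (f (g (x i)))) := fun f g => rfl
  -- Key computation 1 : pairing against `p ↦ θ j p • m₀`
  have key1 : ∀ (f : M →ₗ[R] P) (j : Fin m) (m₀ : M),
      B f ⟨⟨fun p => θ j p • m₀, fun p q => by simp [add_smul]⟩,
        fun r p => by simp [mul_smul]⟩ = φ (θ j (f m₀)) := by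
    intro f j m₀
    rw [hBapp]
    have : ∀ i : Fin m, φ (θ i (f (θ j (x i) • m₀))) = φ (θ i (f m₀) * θ j (x i)) := by
      intro i
      rw [f.map_smul, (θ i).map_smul, smul_eq_mul, hsym]
    simp only [LinearMap.coe_mk, AddHom.coe_mk, this]
    have : ∑ i, φ (θ i (f m₀) * θ j (x i)) = φ (θ j (∑ i, θ i (f m₀) • x i)) := by
      rw [map_sum, map_sum]
      congr 1
      ext i
      rw [(θ j).map_smul, smul_eq_mul]
    rw [this, hx]
  -- Key computation 2 : pairing of `m ↦ λ m • x j` against `g`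
  have key2 : ∀ (lam : M →ₗ[R] R) (j : Fin m) (g : P →ₗ[R] M),
      B ⟨⟨fun mm => lam mm • x j, fun p q => by simp [add_smul]⟩,
        fun r p => by simp [mul_smul]⟩ g = φ (lam (g (x j))) := by
    intro lam j g
    rw [hBapp]
    have h1 : ∀ i : Fin m, φ (θ i (lam (g (x i)) • x j)) = φ (θ i (x j) * lam (g (x i))) := by
      intro i
      rw [(θ i).map_smul, smul_eq_mul, hsym]
    simp only [LinearMap.coe_mk, AddHom.coe_mk, h1]
    have h2 : ∀ i : Fin m, φ (θ i (x j) * lam (g (x i)))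
        = φ (lam (θ i (x j) • g (x i))) := by
      intro i
      rw [lam.map_smul, smul_eq_mul]
    simp only [h2]
    rw [← map_sum, ← map_sum]
    congr 2
    calc ∑ i, θ i (x j) • g (x i) = g (∑ i, θ i (x j) • x i) := by
          rw [map_sum]; congr 1; ext i; rw [g.map_smul]
      _ = g (x j) := by rw [hx]
  -- Injectivity of `B` in the first variable
  have hinj1 : Function.Injective B := by
    rw [injective_iff_map_eq_zero]
    intro f hf
    have hf' : ∀ g : P →ₗ[R] M, B f g = 0 := fun g => by rw [hf]; rfl
    ext mm
    have hθ : ∀ j : Fin m, θ j (f mm) = 0 := by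
      intro j
      refine aux_phi_nondeg φ hker _ fun r => ?_
      have h0 := key1 f j (r • mm)
      rw [hf'] at h0
      rw [f.map_smul, (θ j).map_smul, smul_eq_mul] at h0
      exact h0.symm
    have := hx (f mm)
    simp only [hθ, zero_smul, Finset.sum_const_zero] at this
    simp [← this]
  -- Injectivity of `B.flip`
  have hinj2 : Function.Injective B.flip := by
    rw [injective_iff_map_eq_zero]
    intro g hg
    have hg' : ∀ f : M →ₗ[R] P, B f g = 0 := fun f => by
      have := congrFun (congrArg DFunLike.coe hg) f
      simpa using this
    -- the map ρ : R → Dual K R, a ↦ (s ↦ φ (s * a)), is bijective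
    set ρ : R →ₗ[K] Module.Dual K R :=
      LinearMap.mk₂ K (fun a s => φ (s * a))
        (fun a a' s => by simp [mul_add])
        (fun k a s => by simp [mul_smul_comm])
        (fun a s s' => by simp [add_mul])
        (fun k a s => by simp [smul_mul_assoc]) with hρdef
    have hρapp : ∀ a s : R, ρ a s = φ (s * a) := fun a s => rfl
    have hρinj : Function.Injective ρ := by
      rw [injective_iff_map_eq_zero]
      intro a ha
      refine aux_phi_nondeg φ hker a fun r => ?_
      have := congrFun (congrArg DFunLike.coe ha) r
      simpa [hρapp] using this
    have hρsurj : Function.Surjective ρ :=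
      (LinearMap.injective_iff_surjective_of_finrank_eq_finrank
        (Subspace.dual_finrank_eq (V := R)).symm).mp hρinj
    set e₀ : R ≃ₗ[K] Module.Dual K R := LinearEquiv.ofBijective ρ ⟨hρinj, hρsurj⟩ with he₀
    -- it suffices to show that every `g (x j)` vanishes
    have hgx : ∀ j : Fin m, g (x j) = 0 := by
      intro j
      rw [← Module.forall_dual_apply_eq_zero_iff (R := K)]
      intro ψ
      -- build `lam : M →ₗ[R] R` with `φ (s * lam m) = ψ (s • m)`
      set μ : M → Module.Dual K R := fun mm =>
        { toFun := fun s => ψ (s • mm)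
          map_add' := fun s s' => by simp [add_smul]
          map_smul' := fun k s => by simp [smul_assoc] } with hμ
      have hμapp : ∀ (mm : M) (s : R), μ mm s = ψ (s • mm) := fun _ _ => rfl
      set lam : M →ₗ[R] R :=
        { toFun := fun mm => e₀.symm (μ mm)
          map_add' := fun mm mm' => by
            have hμadd : μ (mm + mm') = μ mm + μ mm' :=
              LinearMap.ext fun s => by simp [hμapp, smul_add]
            show e₀.symm (μ (mm + mm')) = e₀.symm (μ mm) + e₀.symm (μ mm')
            rw [hμadd, map_add]
          map_smul' := fun r mm => by
            simp only [RingHom.id_apply]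
            rw [LinearEquiv.symm_apply_eq]
            ext s
            have : e₀ (r • e₀.symm (μ mm)) s = ρ (r • e₀.symm (μ mm)) s := rfl
            rw [this, hρapp, smul_eq_mul, ← mul_assoc]
            have h2 : φ (s * r * e₀.symm (μ mm)) = ρ (e₀.symm (μ mm)) (s * r) := rfl
            rw [h2]
            have h3 : ρ (e₀.symm (μ mm)) = e₀ (e₀.symm (μ mm)) := rfl
            rw [h3, LinearEquiv.apply_symm_apply]
            rw [hμapp, hμapp, mul_smul] } with hlam
      have hφlam : ∀ mm : M, φ (lam mm) = ψ mm := by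
        intro mm
        have h1 : φ (lam mm) = ρ (lam mm) 1 := by rw [hρapp, one_mul]
        have h2 : ρ (lam mm) = e₀ (lam mm) := rfl
        have h3 : e₀ (lam mm) = μ mm := by
          show e₀ (e₀.symm (μ mm)) = μ mm
          exact e₀.apply_symm_apply (μ mm)
        rw [h1, h2, h3, hμapp, one_smul]
      have hk := key2 lam j g
      rw [hg'] at hk
      rw [← hφlam (g (x j))]
      exact hk.symm
    ext p
    have := hx p
    calc g p = g (∑ i, θ i p • x i) := by rw [hx]
      _ = ∑ i, θ i p • g (x i) := by rw [map_sum]; congr 1; ext i; rw [g.map_smul]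
      _ = 0 := by simp [hgx]
  -- dimension count
  have hdim : finrank K (M →ₗ[R] P) = finrank K (Module.Dual K (P →ₗ[R] M)) := by
    have h1 : finrank K (M →ₗ[R] P) ≤ finrank K (Module.Dual K (P →ₗ[R] M)) :=
      LinearMap.finrank_le_finrank_of_injective hinj1
    have h2 : finrank K (P →ₗ[R] M) ≤ finrank K (Module.Dual K (M →ₗ[R] P)) :=
      LinearMap.finrank_le_finrank_of_injective hinj2
    rw [Subspace.dual_finrank_eq] at h1 h2
    rw [Subspace.dual_finrank_eq]
    exact le_antisymm h1 h2
  have hsurj : Function.Surjective B :=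
    (LinearMap.injective_iff_surjective_of_finrank_eq_finrank hdim).mp hinj1
  exact ⟨LinearEquiv.ofBijective B ⟨hinj1, hsurj⟩, fun f g => rfl⟩
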